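/- The function x ↦ ψ(x) + ln(e^{1/x} − 1) is strictly increasing on (0,∞) and tends to 0 as x → ∞. -/

import Mathlib

open Filter

noncomputable def psi : ℝ → ℝ := deriv (fun x => Real.log (Real.Gamma x))

open Real Set Topology

lemma cubic_le_exp {x : ℝ} (hx : 0 ≤ x) : 1 + x + x^2/2 + x^3/6 ≤ Real.exp x := by
  have h := Real.sum_le_exp_of_nonneg hx 4
  have he : ∑ i ∈ Finset.range 4, x ^ i / (Nat.factorial i : ℝ) = 1 + x + x^2/2 + x^3/6 := by
    simp [Finset.sum_range_succ, Nat.factorial]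
  linarith [he ▸ h]

lemma exp_neg_le_quad {x : ℝ} (hx : 0 ≤ x) : Real.exp (-x) ≤ 1 - x + x^2/2 := by
  set h : ℝ → ℝ := fun t => 1 - t + t^2/2 - Real.exp (-t) with hh
  have hd : ∀ y : ℝ, HasDerivAt h (-1 + y + Real.exp (-y)) y := by
    intro y
    have he : HasDerivAt (fun t : ℝ => Real.exp (-t)) (Real.exp (-y) * (-1)) y :=
      (Real.hasDerivAt_exp (-y)).comp y (hasDerivAt_neg y)
    have := (((hasDerivAt_const y (1:ℝ)).sub (hasDerivAt_id y)).add
      ((hasDerivAt_pow 2 y).div_const 2)).sub he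
    refine this.congr_deriv ?_
    simp
  have mono : MonotoneOn h (Ici 0) := by
    apply monotoneOn_of_deriv_nonneg (convex_Ici 0)
      (fun y _ => ((hd y).differentiableAt).continuousAt.continuousWithinAt)
      (fun y _ => ((hd y).differentiableAt).differentiableWithinAt)
    intro y hy
    rw [(hd y).deriv]
    have := Real.add_one_le_exp (-y)
    rw [interior_Ici] at hy
    linarith
  have h0 : h 0 = 0 := by simp [hh]
  have := mono (self_mem_Ici) hx hx
  rw [h0] at this
  simp only [hh] at this
  linarith

lemma cubic_le_exp_neg {x : ℝ} (hx : 0 ≤ x) : 1 - x + x^2/2 - x^3/6 ≤ Real.exp (-x) := by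
  set h : ℝ → ℝ := fun t => Real.exp (-t) - (1 - t + t^2/2 - t^3/6) with hh
  have hd : ∀ y : ℝ, HasDerivAt h (Real.exp (-y) * (-1) - (-1 + y - y^2/2)) y := by
    intro y
    have he : HasDerivAt (fun t : ℝ => Real.exp (-t)) (Real.exp (-y) * (-1)) y :=
      (Real.hasDerivAt_exp (-y)).comp y (hasDerivAt_neg y)
    have hp : HasDerivAt (fun t : ℝ => 1 - t + t^2/2 - t^3/6) (-1 + y - y^2/2) y := by
      have := (((hasDerivAt_const y (1:ℝ)).sub (hasDerivAt_id y)).add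
        ((hasDerivAt_pow 2 y).div_const 2)).sub ((hasDerivAt_pow 3 y).div_const 6)
      refine this.congr_deriv ?_
      simp
      ring
    exact he.sub hp
  have mono : MonotoneOn h (Ici 0) := by
    apply monotoneOn_of_deriv_nonneg (convex_Ici 0)
      (fun y _ => ((hd y).differentiableAt).continuousAt.continuousWithinAt)
      (fun y _ => ((hd y).differentiableAt).differentiableWithinAt)
    intro y hy
    rw [interior_Ici] at hy
    rw [(hd y).deriv]
    have := exp_neg_le_quad hy.le
    linarith
  have h0 : h 0 = 0 := by simp [hh]
  have := mono (self_mem_Ici) hx hx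
  rw [h0] at this
  simp only [hh] at this
  linarith

noncomputable def gfun : ℝ → ℝ :=
  fun t => 1/t + Real.log (Real.exp (1/(t+1)) - 1) - Real.log (Real.exp (1/t) - 1)

lemma exp_one_div_sub_one_pos {t : ℝ} (ht : 0 < t) : 0 < Real.exp (1/t) - 1 := by
  have : (1:ℝ) < Real.exp (1/t) := by
    rw [← Real.exp_zero]
    exact Real.exp_lt_exp.mpr (by positivity)
  linarith

lemma key_ineq {t : ℝ} (ht : 0 < t) :
    (t+1)^2 * (1 - Real.exp (-(1/(t+1)))) < t^2 * (Real.exp (1/t) - 1) := by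
  have ht1 : (0:ℝ) < t + 1 := by linarith
  have h1 := cubic_le_exp (x := 1/t) (by positivity)
  have h2 := cubic_le_exp_neg (x := 1/(t+1)) (by positivity)
  have e1 : t + 1/2 + 1/(6*t) ≤ t^2 * (Real.exp (1/t) - 1) := by
    have : t^2 * ((1/t) + (1/t)^2/2 + (1/t)^3/6) ≤ t^2 * (Real.exp (1/t) - 1) := by
      apply mul_le_mul_of_nonneg_left (by linarith) (by positivity)
    have heq : t^2 * ((1/t) + (1/t)^2/2 + (1/t)^3/6) = t + 1/2 + 1/(6*t) := by
      field_simp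
    linarith [heq ▸ this]
  have e2 : (t+1)^2 * (1 - Real.exp (-(1/(t+1)))) ≤ t + 1/2 + 1/(6*(t+1)) := by
    have : (t+1)^2 * (1 - Real.exp (-(1/(t+1)))) ≤
        (t+1)^2 * ((1/(t+1)) - (1/(t+1))^2/2 + (1/(t+1))^3/6) := by
      apply mul_le_mul_of_nonneg_left (by linarith) (by positivity)
    have heq : (t+1)^2 * ((1/(t+1)) - (1/(t+1))^2/2 + (1/(t+1))^3/6)
        = t + 1/2 + 1/(6*(t+1)) := by
      field_simp
      ring
    linarith [heq ▸ this]
  have e3 : 1/(6*(t+1)) < 1/(6*t) := by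
    apply one_div_lt_one_div_of_lt (by positivity)
    linarith
  linarith

lemma hasDerivAt_log_exp_sub_one {t : ℝ} (ht : 0 < t) :
    HasDerivAt (fun t : ℝ => Real.log (Real.exp (1/t) - 1))
      ((Real.exp (1/t) * (-(1/t^2))) / (Real.exp (1/t) - 1)) t := by
  have h1 : HasDerivAt (fun t : ℝ => 1/t) (-(1/t^2)) t := by
    simpa [one_div] using hasDerivAt_inv ht.ne'
  have h2 : HasDerivAt (fun t : ℝ => Real.exp (1/t) - 1) (Real.exp (1/t) * (-(1/t^2))) t :=
    ((Real.hasDerivAt_exp (1/t)).comp t h1).sub_const 1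
  exact h2.log (exp_one_div_sub_one_pos ht).ne'

lemma hasDerivAt_gfun {t : ℝ} (ht : 0 < t) :
    HasDerivAt gfun
      (1/(t^2 * (Real.exp (1/t) - 1))
        - Real.exp (1/(t+1)) / ((t+1)^2 * (Real.exp (1/(t+1)) - 1))) t := by
  have ht1 : (0:ℝ) < t + 1 := by linarith
  have h1 : HasDerivAt (fun t : ℝ => 1/t) (-(1/t^2)) t := by
    simpa [one_div] using hasDerivAt_inv ht.ne'
  have h2 : HasDerivAt (fun t : ℝ => Real.log (Real.exp (1/(t+1)) - 1))
      ((Real.exp (1/(t+1)) * (-(1/(t+1)^2))) / (Real.exp (1/(t+1)) - 1)) t :=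
    by
      have := (hasDerivAt_log_exp_sub_one ht1).comp t ((hasDerivAt_id t).add_const 1)
      exact this.congr_deriv (by ring)
  have h3 := hasDerivAt_log_exp_sub_one ht
  have := (h1.add h2).sub h3
  refine this.congr_deriv ?_
  have ha := (exp_one_div_sub_one_pos ht).ne'
  have hb := (exp_one_div_sub_one_pos ht1).ne'
  field_simp
  ring

lemma gfun_deriv_neg {t : ℝ} (ht : 0 < t) :
    1/(t^2 * (Real.exp (1/t) - 1))
      - Real.exp (1/(t+1)) / ((t+1)^2 * (Real.exp (1/(t+1)) - 1)) < 0 := by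
  have ht1 : (0:ℝ) < t + 1 := by linarith
  have ha : 0 < Real.exp (1/t) - 1 := exp_one_div_sub_one_pos ht
  have hb : 0 < Real.exp (1/(t+1)) - 1 := exp_one_div_sub_one_pos ht1
  have hbe : 0 < Real.exp (1/(t+1)) := Real.exp_pos _
  have hkey := key_ineq ht
  have hinv : Real.exp (1/(t+1)) * Real.exp (-(1/(t+1))) = 1 := by
    rw [← Real.exp_add]; simp
  rw [sub_neg, div_lt_div_iff₀ (by positivity) (by positivity)]
  nlinarith [mul_lt_mul_of_pos_left hkey hbe]

lemma gfun_strictAnti : StrictAntiOn gfun (Ioi 0) := by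
  apply strictAntiOn_of_deriv_neg (convex_Ioi 0)
    (fun t ht => ((hasDerivAt_gfun ht).differentiableAt).continuousAt.continuousWithinAt)
  intro t ht
  rw [interior_Ioi] at ht
  rw [(hasDerivAt_gfun ht).deriv]
  exact gfun_deriv_neg ht

lemma Gamma_arg_ne {x : ℝ} (hx : 0 < x) : ∀ m : ℕ, x ≠ -m := by
  intro m
  have : (0:ℝ) ≤ m := Nat.cast_nonneg m
  intro h
  rw [h] at hx
  linarith

lemma diffAt_logGamma {x : ℝ} (hx : 0 < x) :
    DifferentiableAt ℝ (fun x => Real.log (Real.Gamma x)) x :=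
  (Real.differentiableAt_Gamma (Gamma_arg_ne hx)).log (Real.Gamma_pos_of_pos hx).ne'

lemma hasDerivAt_logGamma {x : ℝ} (hx : 0 < x) :
    HasDerivAt (fun x => Real.log (Real.Gamma x)) (psi x) x :=
  (diffAt_logGamma hx).hasDerivAt

lemma logGamma_rec {x : ℝ} (hx : 0 < x) :
    Real.log (Real.Gamma (x + 1)) = Real.log (Real.Gamma x) + Real.log x := by
  rw [Real.Gamma_add_one hx.ne', Real.log_mul hx.ne' (Real.Gamma_pos_of_pos hx).ne']
  ring

lemma psi_rec {x : ℝ} (hx : 0 < x) : psi (x + 1) = psi x + 1/x := by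
  have h1 : HasDerivAt (fun y : ℝ => Real.log (Real.Gamma (y + 1))) (psi (x+1)) x := by
    have := (hasDerivAt_logGamma (by linarith : (0:ℝ) < x + 1)).comp x
      ((hasDerivAt_id x).add_const 1)
    exact this.congr_deriv (mul_one _)
  have h2 : HasDerivAt (fun y : ℝ => Real.log (Real.Gamma y) + Real.log y)
      (psi x + 1/x) x := by
    have := (hasDerivAt_logGamma hx).add (Real.hasDerivAt_log hx.ne')
    rw [one_div]; exact this
  have heq : (fun y : ℝ => Real.log (Real.Gamma (y + 1))) =ᶠ[nhds x]
      (fun y : ℝ => Real.log (Real.Gamma y) + Real.log y) := by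
    filter_upwards [eventually_gt_nhds hx] with y hy using logGamma_rec hy
  exact (h1.congr_of_eventuallyEq heq.symm).unique h2

lemma psi_le_log {x : ℝ} (hx : 0 < x) : psi x ≤ Real.log x := by
  have hc := Real.convexOn_log_Gamma
  have h := hc.deriv_le_slope (mem_Ioi.mpr hx) (mem_Ioi.mpr (by linarith : (0:ℝ) < x + 1))
    (by linarith) ((diffAt_logGamma hx : _))
  rw [slope_def_field, add_sub_cancel_left, div_one] at h
  have : (Real.log ∘ Real.Gamma) (x+1) - (Real.log ∘ Real.Gamma) x = Real.log x := by
    simp only [Function.comp_apply]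
    rw [logGamma_rec hx]; ring
  rw [this] at h
  exact h

lemma log_le_psi {x : ℝ} (hx : 1 < x) : Real.log (x - 1) ≤ psi x := by
  have hx0 : (0:ℝ) < x := by linarith
  have hx1 : (0:ℝ) < x - 1 := by linarith
  have hc := Real.convexOn_log_Gamma
  have h := hc.slope_le_deriv (mem_Ioi.mpr hx1) (mem_Ioi.mpr hx0)
    (by linarith) ((diffAt_logGamma hx0 : _))
  rw [slope_def_field, sub_sub_cancel, div_one] at h
  have : (Real.log ∘ Real.Gamma) x - (Real.log ∘ Real.Gamma) (x - 1) = Real.log (x - 1) := by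
    simp only [Function.comp_apply]
    have := logGamma_rec hx1
    rw [sub_add_cancel] at this
    rw [this]; ring
  rw [this] at h
  exact h

lemma tendsto_psi_sub_log : Tendsto (fun x => psi x - Real.log x) atTop (nhds 0) := by
  have h1 : Tendsto (fun x : ℝ => (x-1)/x) atTop (nhds 1) := by
    have hinv : Tendsto (fun x : ℝ => 1 - x⁻¹) atTop (nhds (1 - 0)) :=
      tendsto_const_nhds.sub tendsto_inv_atTop_zero
    rw [sub_zero] at hinv
    apply hinv.congr'
    filter_upwards [eventually_gt_atTop (0:ℝ)] with x hx
    field_simp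
  have hlow : Tendsto (fun x : ℝ => Real.log (x-1) - Real.log x) atTop (nhds 0) := by
    have h2 := (Real.continuousAt_log one_ne_zero).tendsto.comp h1
    rw [Real.log_one] at h2
    apply h2.congr'
    filter_upwards [eventually_gt_atTop (1:ℝ)] with x hx
    rw [Function.comp_apply, Real.log_div (by linarith) (by linarith)]
  apply tendsto_of_tendsto_of_tendsto_of_le_of_le' hlow tendsto_const_nhds
  · filter_upwards [eventually_gt_atTop (1:ℝ)] with x hx
    have := log_le_psi hx; linarith
  · filter_upwards [eventually_gt_atTop (0:ℝ)] with x hx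
    have := psi_le_log hx; linarith

lemma tendsto_log_mul : Tendsto (fun x : ℝ => Real.log x + Real.log (Real.exp (1/x) - 1))
    atTop (nhds 0) := by
  have hslope : Tendsto (fun t : ℝ => (Real.exp t - 1)/t) (nhdsWithin 0 {(0:ℝ)}ᶜ) (nhds 1) := by
    have := hasDerivAt_iff_tendsto_slope.mp (Real.hasDerivAt_exp 0)
    rw [Real.exp_zero] at this
    apply this.congr
    intro t
    rw [slope_def_field, Real.exp_zero]
    simp
  have hinv : Tendsto (fun x : ℝ => 1/x) atTop (nhdsWithin 0 {(0:ℝ)}ᶜ) := by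
    apply tendsto_nhdsWithin_of_tendsto_nhds_of_eventually_within
    · simpa [one_div] using tendsto_inv_atTop_zero
    · filter_upwards [eventually_gt_atTop (0:ℝ)] with x hx
      simp only [Set.mem_compl_iff, Set.mem_singleton_iff]
      positivity
  have hmul : Tendsto (fun x : ℝ => x * (Real.exp (1/x) - 1)) atTop (nhds 1) := by
    apply (hslope.comp hinv).congr'
    filter_upwards [eventually_gt_atTop (0:ℝ)] with x hx
    rw [Function.comp_apply]
    field_simp
  have hlog := (Real.continuousAt_log one_ne_zero).tendsto.comp hmul
  rw [Real.log_one] at hlog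
  apply hlog.congr'
  filter_upwards [eventually_gt_atTop (0:ℝ)] with x hx
  rw [Function.comp_apply, Real.log_mul hx.ne' (exp_one_div_sub_one_pos hx).ne']

lemma tendsto_phi : Tendsto (fun x : ℝ => psi x + Real.log (Real.exp (1 / x) - 1))
    atTop (nhds 0) := by
  have := tendsto_psi_sub_log.add tendsto_log_mul
  rw [add_zero] at this
  apply this.congr
  intro x
  ring

lemma phi_rec {x : ℝ} (hx : 0 < x) :
    psi (x+1) + Real.log (Real.exp (1/(x+1)) - 1)
      = (psi x + Real.log (Real.exp (1/x) - 1)) + gfun x := by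
  rw [psi_rec hx, gfun]
  ring

lemma phi_add_nat {x : ℝ} (hx : 0 < x) (n : ℕ) :
    psi (x+n) + Real.log (Real.exp (1/(x+n)) - 1)
      = (psi x + Real.log (Real.exp (1/x) - 1))
        + ∑ k ∈ Finset.range n, gfun (x + k) := by
  induction n with
  | zero => simp
  | succ n ih =>
    have hxn : 0 < x + n := by positivity
    have h := phi_rec hxn
    push_cast
    have hxe : x + ((n:ℝ) + 1) = (x + n) + 1 := by ring
    rw [Finset.sum_range_succ, hxe, h, ih]
    ring

theorem phi_strictMono_and_limit :
    StrictMonoOn (fun x : ℝ => psi x + Real.log (Real.exp (1 / x) - 1)) (Set.Ioi 0) ∧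
    Tendsto (fun x : ℝ => psi x + Real.log (Real.exp (1 / x) - 1)) atTop (nhds 0) := by
  constructor
  · intro x hx y hy hxy
    simp only [Set.mem_Ioi] at hx hy
    simp only []
    have hg : gfun y < gfun x := gfun_strictAnti (Set.mem_Ioi.mpr hx) (Set.mem_Ioi.mpr hy) hxy
    have key : ∀ n : ℕ, 1 ≤ n →
        ((psi (y+n) + Real.log (Real.exp (1/(y+n)) - 1))
          - (psi (x+n) + Real.log (Real.exp (1/(x+n)) - 1))) + (gfun x - gfun y)
          ≤ (psi y + Real.log (Real.exp (1/y) - 1))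
            - (psi x + Real.log (Real.exp (1/x) - 1)) := by
      intro n hn
      have hX := phi_add_nat hx n
      have hY := phi_add_nat hy n
      have hsum : gfun x - gfun y
          ≤ ∑ k ∈ Finset.range n, (gfun (x+(k:ℝ)) - gfun (y+(k:ℝ))) := by
        have h0 : gfun (x+((0:ℕ):ℝ)) - gfun (y+((0:ℕ):ℝ)) = gfun x - gfun y := by
          norm_num
        rw [← h0]
        apply Finset.single_le_sum (f := fun k : ℕ => gfun (x+(k:ℝ)) - gfun (y+(k:ℝ)))
        · intro k _
          have hk : (0:ℝ) ≤ k := Nat.cast_nonneg k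
          have := gfun_strictAnti (Set.mem_Ioi.mpr (by linarith : (0:ℝ) < x + k))
            (Set.mem_Ioi.mpr (by linarith : (0:ℝ) < y + k)) (by linarith)
          linarith
        · exact Finset.mem_range.mpr hn
      rw [Finset.sum_sub_distrib] at hsum
      linarith
    have htend : Tendsto (fun n : ℕ =>
        ((psi (y+n) + Real.log (Real.exp (1/(y+n)) - 1))
          - (psi (x+n) + Real.log (Real.exp (1/(x+n)) - 1))) + (gfun x - gfun y))
        atTop (nhds ((0 - 0) + (gfun x - gfun y))) := by
      have hy' : Tendsto (fun n : ℕ => y + (n:ℝ)) atTop atTop :=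
        tendsto_atTop_add_const_left atTop y tendsto_natCast_atTop_atTop
      have hx' : Tendsto (fun n : ℕ => x + (n:ℝ)) atTop atTop :=
        tendsto_atTop_add_const_left atTop x tendsto_natCast_atTop_atTop
      exact ((tendsto_phi.comp hy').sub (tendsto_phi.comp hx')).add tendsto_const_nhds
    rw [show (0:ℝ) - 0 + (gfun x - gfun y) = gfun x - gfun y by ring] at htend
    have hfin : gfun x - gfun y
        ≤ (psi y + Real.log (Real.exp (1/y) - 1))
          - (psi x + Real.log (Real.exp (1/x) - 1)) :=
      le_of_tendsto htend (eventually_atTop.mpr ⟨1, key⟩)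
    linarith
  · exact tendsto_phi
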